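/- The matrices E_1, …, E_N pairwise commute: E_i E_j = E_j E_i for all 1 ≤ i, j ≤ N; hence their complex span 𝔞 = span_ℂ{E_1, …, E_N} is an abelian Lie subalgebra of the Lie algebra of (2N+2)×(2N+2) complex matrices. Moreover every element of 𝔞 is nilpotent: (Σ_{i=1}^N t_i E_i)⁴ = 0 for every t ∈ ℂ^N. -/

import Mathlib

/-!
Matrices arising from the infinitesimal period map of polarized Calabi–Yau
threefolds.  Indices of `Fin (2 * N + 2)` are grouped in blocks of sizes
`1, N, N, 1`: position `0` (`cyFst`), positions `1, …, N` (`cyBlk₁`),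
positions `N + 1, …, 2N` (`cyBlk₂`), and position `2N + 1` (`cyLst`).
-/

/-- The first index `0` of `Fin (2 * N + 2)`. -/
def cyFst (N : ℕ) : Fin (2 * N + 2) := ⟨0, by omega⟩

/-- The index `1 + j` in `Fin (2 * N + 2)`: the `j`-th position of the second block. -/
def cyBlk₁ {N : ℕ} (j : Fin N) : Fin (2 * N + 2) := ⟨1 + j.val, by omega⟩

/-- The index `N + 1 + k` in `Fin (2 * N + 2)`: the `k`-th position of the third block. -/
def cyBlk₂ {N : ℕ} (k : Fin N) : Fin (2 * N + 2) := ⟨N + 1 + k.val, by omega⟩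

/-- The last index `2N + 1` of `Fin (2 * N + 2)`. -/
def cyLst (N : ℕ) : Fin (2 * N + 2) := ⟨2 * N + 1, by omega⟩

/-- Given `C : {1,…,N}³ → ℂ`, the matrix `E_i ∈ M_{2N+2}(ℂ)` in block form
`E_i = [[0, e_i, 0, 0], [0, 0, A_i, 0], [0, 0, 0, e_iᵀ], [0, 0, 0, 0]]`, where
`(A_i)_{jk} = C i j k`. -/
noncomputable def cyE {N : ℕ} (C : Fin N → Fin N → Fin N → ℂ) (i : Fin N) :
    Matrix (Fin (2 * N + 2)) (Fin (2 * N + 2)) ℂ := fun a b =>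
  (if a = cyFst N ∧ b = cyBlk₁ i then 1 else 0) +
    (∑ j : Fin N, ∑ k : Fin N,
      if a = cyBlk₁ j ∧ b = cyBlk₂ k then C i j k else 0) +
    (if a = cyBlk₂ i ∧ b = cyLst N then 1 else 0)

/-- `C` is symmetric under all permutations of its three indices. -/
def cySymm {N : ℕ} (C : Fin N → Fin N → Fin N → ℂ) : Prop :=
  (∀ i j k, C i j k = C j i k) ∧ (∀ i j k, C i j k = C i k j)

/-- The row vector `t A(t)`, where `A(t) = Σ_i t_i A_i` with `(A_i)_{jk} = C i j k`;
`cyAt C t j k` is the `(j,k)` entry of `A(t)`. -/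
noncomputable def cyAt {N : ℕ} (C : Fin N → Fin N → Fin N → ℂ) (t : Fin N → ℂ) (j k : Fin N) : ℂ :=
  ∑ i : Fin N, t i * C i j k



section helper
variable {N : ℕ}

@[simp] lemma cyBlk₁_ne_fst (j : Fin N) : cyBlk₁ j ≠ cyFst N := by
  simp [cyBlk₁, cyFst, Fin.ext_iff]
@[simp] lemma cyBlk₂_ne_fst (j : Fin N) : cyBlk₂ j ≠ cyFst N := by
  simp [cyBlk₂, cyFst, Fin.ext_iff]
@[simp] lemma cyLst_ne_fst : cyLst N ≠ cyFst N := by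
  simp [cyLst, cyFst, Fin.ext_iff]
@[simp] lemma cyBlk₁_ne_blk₂ (j k : Fin N) : cyBlk₁ j ≠ cyBlk₂ k := by
  have := j.2; simp [cyBlk₁, cyBlk₂, Fin.ext_iff]; omega
@[simp] lemma cyBlk₂_ne_blk₁ (j k : Fin N) : cyBlk₂ j ≠ cyBlk₁ k := by
  have := k.2; simp [cyBlk₁, cyBlk₂, Fin.ext_iff]; omega
@[simp] lemma cyLst_ne_blk₁ (j : Fin N) : cyLst N ≠ cyBlk₁ j := by
  have := j.2; simp [cyLst, cyBlk₁, Fin.ext_iff]; omega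
@[simp] lemma cyLst_ne_blk₂ (j : Fin N) : cyLst N ≠ cyBlk₂ j := by
  have := j.2; simp [cyLst, cyBlk₂, Fin.ext_iff]; omega
@[simp] lemma cyBlk₁_inj {j k : Fin N} : cyBlk₁ j = cyBlk₁ k ↔ j = k := by
  simp [cyBlk₁, Fin.ext_iff]
@[simp] lemma cyBlk₂_inj {j k : Fin N} : cyBlk₂ j = cyBlk₂ k ↔ j = k := by
  simp [cyBlk₂, Fin.ext_iff]

lemma cyE_eq (C : Fin N → Fin N → Fin N → ℂ) (i : Fin N) :
    cyE C i = Matrix.single (cyFst N) (cyBlk₁ i) 1 +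
      (∑ p : Fin N, ∑ q : Fin N,
        Matrix.single (cyBlk₁ p) (cyBlk₂ q) (C i p q)) +
      Matrix.single (cyBlk₂ i) (cyLst N) 1 := by
  ext a b
  simp only [cyE, Matrix.add_apply, Matrix.sum_apply, Matrix.single,
    Matrix.of_apply, eq_comm]

lemma cyE_mul (C : Fin N → Fin N → Fin N → ℂ) (i j : Fin N) :
    cyE C i * cyE C j =
      (∑ q : Fin N, Matrix.single (cyFst N) (cyBlk₂ q) (C j i q)) +
      ∑ p : Fin N, Matrix.single (cyBlk₁ p) (cyLst N) (C i p j) := by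
  rw [cyE_eq C i, cyE_eq C j]
  rw [add_mul, add_mul, mul_add, mul_add, mul_add, mul_add, mul_add, mul_add]
  have hXY : Matrix.single (cyFst N) (cyBlk₁ i) (1:ℂ) *
      (∑ p : Fin N, ∑ q : Fin N,
        Matrix.single (cyBlk₁ p) (cyBlk₂ q) (C j p q)) =
      ∑ q : Fin N, Matrix.single (cyFst N) (cyBlk₂ q) (C j i q) := by
    rw [Finset.mul_sum]
    rw [Fintype.sum_eq_single i (fun p hp => by
      rw [Finset.mul_sum]
      refine Finset.sum_eq_zero fun q _ => ?_
      exact Matrix.single_mul_single_of_ne _ _ _ _ (by simp [Ne.symm, hp]) _)]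
    rw [Finset.mul_sum]
    refine Finset.sum_congr rfl fun q _ => ?_
    rw [Matrix.single_mul_single_same, one_mul]
  have hYZ : (∑ p : Fin N, ∑ q : Fin N,
      Matrix.single (cyBlk₁ p) (cyBlk₂ q) (C i p q)) *
      Matrix.single (cyBlk₂ j) (cyLst N) (1:ℂ) =
      ∑ p : Fin N, Matrix.single (cyBlk₁ p) (cyLst N) (C i p j) := by
    rw [Finset.sum_mul]
    refine Finset.sum_congr rfl fun p _ => ?_
    rw [Finset.sum_mul]
    rw [Fintype.sum_eq_single j (fun q hq => Matrix.single_mul_single_of_ne _ _ _ _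
      (by simp [hq]) _)]
    rw [Matrix.single_mul_single_same, mul_one]
  rw [hXY, hYZ]
  rw [Matrix.single_mul_single_of_ne _ _ _ _ (cyBlk₁_ne_fst i)]
  rw [Matrix.single_mul_single_of_ne _ _ _ _ (cyBlk₁_ne_blk₂ i j)]
  have hYX : (∑ p : Fin N, ∑ q : Fin N,
      Matrix.single (cyBlk₁ p) (cyBlk₂ q) (C i p q)) *
      Matrix.single (cyFst N) (cyBlk₁ j) (1:ℂ) = 0 := by
    rw [Finset.sum_mul]
    refine Finset.sum_eq_zero fun p _ => ?_
    rw [Finset.sum_mul]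
    exact Finset.sum_eq_zero fun q _ =>
      Matrix.single_mul_single_of_ne _ _ _ _ (cyBlk₂_ne_fst q) _
  have hYY : (∑ p : Fin N, ∑ q : Fin N,
      Matrix.single (cyBlk₁ p) (cyBlk₂ q) (C i p q)) *
      (∑ p : Fin N, ∑ q : Fin N,
        Matrix.single (cyBlk₁ p) (cyBlk₂ q) (C j p q)) = 0 := by
    rw [Finset.sum_mul]
    refine Finset.sum_eq_zero fun p _ => ?_
    rw [Finset.sum_mul]
    refine Finset.sum_eq_zero fun q _ => ?_
    rw [Finset.mul_sum]
    refine Finset.sum_eq_zero fun p' _ => ?_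
    rw [Finset.mul_sum]
    exact Finset.sum_eq_zero fun q' _ =>
      Matrix.single_mul_single_of_ne _ _ _ _ (cyBlk₂_ne_blk₁ q p') _
  rw [hYX, hYY]
  rw [Matrix.single_mul_single_of_ne _ _ _ _ cyLst_ne_fst]
  have hZY : Matrix.single (cyBlk₂ i) (cyLst N) (1:ℂ) *
      (∑ p : Fin N, ∑ q : Fin N,
        Matrix.single (cyBlk₁ p) (cyBlk₂ q) (C j p q)) = 0 := by
    rw [Finset.mul_sum]
    refine Finset.sum_eq_zero fun p _ => ?_
    rw [Finset.mul_sum]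
    exact Finset.sum_eq_zero fun q _ =>
      Matrix.single_mul_single_of_ne _ _ _ _ (cyLst_ne_blk₁ p) _
  rw [hZY]
  rw [Matrix.single_mul_single_of_ne _ _ _ _ (cyLst_ne_blk₂ j)]
  simp

/-- level of an index -/
def cyLvl (N : ℕ) (a : Fin (2 * N + 2)) : ℕ :=
  if a.1 = 0 then 0 else if a.1 ≤ N then 1 else if a.1 ≤ 2 * N then 2 else 3

lemma cyLvl_le (a : Fin (2 * N + 2)) : cyLvl N a ≤ 3 := by
  unfold cyLvl; split_ifs <;> omega

lemma cyLvl_fst : cyLvl N (cyFst N) = 0 := by simp [cyLvl, cyFst]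
lemma cyLvl_blk₁ (j : Fin N) : cyLvl N (cyBlk₁ j) = 1 := by
  have := j.2; have hv : (cyBlk₁ j).1 = 1 + j.1 := rfl; simp only [cyLvl, hv]; split_ifs <;> omega
lemma cyLvl_blk₂ (j : Fin N) : cyLvl N (cyBlk₂ j) = 2 := by
  have := j.2; have hv : (cyBlk₂ j).1 = N + 1 + j.1 := rfl; simp only [cyLvl, hv]; split_ifs <;> omega
lemma cyLvl_lst : cyLvl N (cyLst N) = 3 := by
  have : (cyLst N).1 = 2 * N + 1 := rfl
  simp only [cyLvl, this]; split_ifs <;> first | omega | exact ‹False›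

lemma cyE_lvl (C : Fin N → Fin N → Fin N → ℂ) (i : Fin N) (a b : Fin (2 * N + 2))
    (h : cyE C i a b ≠ 0) : cyLvl N b = cyLvl N a + 1 := by
  by_contra hlvl
  apply h
  unfold cyE
  rw [if_neg (by rintro ⟨rfl, rfl⟩; exact hlvl (by rw [cyLvl_fst, cyLvl_blk₁])),
    if_neg (by rintro ⟨rfl, rfl⟩; exact hlvl (by rw [cyLvl_lst, cyLvl_blk₂]))]
  rw [Finset.sum_eq_zero fun p _ => Finset.sum_eq_zero fun q _ =>
    if_neg (by rintro ⟨rfl, rfl⟩; exact hlvl (by rw [cyLvl_blk₂, cyLvl_blk₁]))]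
  simp

lemma mul_lvl {M M' : Matrix (Fin (2 * N + 2)) (Fin (2 * N + 2)) ℂ} {p q : ℕ}
    (hM : ∀ a b, M a b ≠ 0 → cyLvl N b = cyLvl N a + p)
    (hM' : ∀ a b, M' a b ≠ 0 → cyLvl N b = cyLvl N a + q) :
    ∀ a b, (M * M') a b ≠ 0 → cyLvl N b = cyLvl N a + (p + q) := by
  intro a b h
  by_contra hlvl
  apply h
  rw [Matrix.mul_apply]
  refine Finset.sum_eq_zero fun c _ => ?_
  by_cases h1 : M a c = 0
  · rw [h1, zero_mul]
  by_cases h2 : M' c b = 0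
  · rw [h2, mul_zero]
  exact absurd (by rw [hM' c b h2, hM a c h1]; ring) hlvl

end helper

/-- The matrices `E_1, …, E_N` pairwise commute; hence their complex span
`𝔞 = span_ℂ{E_1, …, E_N}` is an abelian Lie subalgebra of `M_{2N+2}(ℂ)`
(every Lie bracket of elements of the span vanishes); moreover every element
of `𝔞` is nilpotent: `(Σ t_i E_i)⁴ = 0`. -/
theorem cy_commute (N : ℕ) (hN : 1 ≤ N) (C : Fin N → Fin N → Fin N → ℂ)
    (hC : cySymm C) :
    (∀ i j : Fin N, cyE C i * cyE C j = cyE C j * cyE C i) ∧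
    (∀ x ∈ Submodule.span ℂ (Set.range (cyE C)),
      ∀ y ∈ Submodule.span ℂ (Set.range (cyE C)), ⁅x, y⁆ = 0) ∧
    (∀ t : Fin N → ℂ, (∑ i : Fin N, t i • cyE C i) ^ 4 = 0) := by
  obtain ⟨hC1, hC2⟩ := hC
  have hcomm : ∀ i j : Fin N, cyE C i * cyE C j = cyE C j * cyE C i := by
    intro i j
    rw [cyE_mul, cyE_mul]
    congr 1
    · exact Finset.sum_congr rfl fun q _ => by rw [hC1 j i q]
    · refine Finset.sum_congr rfl fun p _ => ?_
      rw [show C i p j = C j p i by rw [hC1 i p j, hC2 p i j, hC1 p j i]]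
  refine ⟨hcomm, ?_, ?_⟩
  · intro x hx y hy
    rw [Ring.lie_def, sub_eq_zero]
    induction hx using Submodule.span_induction with
    | mem x hxm =>
      induction hy using Submodule.span_induction with
      | mem y hym =>
        obtain ⟨i, rfl⟩ := hxm
        obtain ⟨j, rfl⟩ := hym
        exact hcomm i j
      | zero => simp
      | add y z hy hz ihy ihz => rw [mul_add, add_mul, ihy, ihz]
      | smul c y hy ihy => rw [Matrix.mul_smul, Matrix.smul_mul, ihy]
    | zero => simp
    | add x z hx hz ihx ihz => rw [mul_add, add_mul, ihx, ihz]
    | smul c x hx ihx => rw [Matrix.mul_smul, Matrix.smul_mul, ihx]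
  · intro t
    set S := ∑ i : Fin N, t i • cyE C i with hS
    have hSl : ∀ a b, S a b ≠ 0 → cyLvl N b = cyLvl N a + 1 := by
      intro a b h
      by_contra hlvl
      apply h
      rw [hS, Matrix.sum_apply]
      refine Finset.sum_eq_zero fun i _ => ?_
      by_cases h1 : cyE C i a b = 0
      · simp [h1]
      · exact absurd (cyE_lvl C i a b h1) hlvl
    have h2 := mul_lvl hSl hSl
    have h4 := mul_lvl h2 h2
    have hpow : S ^ 4 = S * S * (S * S) := by
      rw [show (4 : ℕ) = 2 + 2 from rfl, pow_add, sq]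
    ext a b
    simp only [Matrix.zero_apply]
    by_contra h
    have hb := h4 a b (by rw [← hpow]; exact h)
    have := cyLvl_le (N := N) b
    omega
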